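/- arXiv:1001.2806 — 5 statements merged into one kernel-verified Lean document; each statement's English description precedes it below -/
import Mathlib

section
/- Let N be a positive definite real symmetric n×n matrix, M a positive semidefinite real symmetric n×n matrix, and B a positive semidefinite real symmetric n×n matrix with M·B = 0. Define Ñ := (N⁻¹ + M)⁻¹. Then (B + Ñ)⁻¹ = (B + N)⁻¹ + M. -/
open Matrix

theorem enhancement_identity {n : ℕ}
    (N M B : Matrix (Fin n) (Fin n) ℝ)
    (hN : N.PosDef) (hM : M.PosSemidef) (hB : B.PosSemidef)
    (hMB : M * B = 0) :
    (B + (N⁻¹ + M)⁻¹)⁻¹ = (B + N)⁻¹ + M := by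
  have hS : (N⁻¹ + M).PosDef := hN.inv.add_posSemidef hM
  have hBN : (B + N).PosDef := Matrix.PosDef.posSemidef_add hB hN
  have hBM : B * M = 0 := by
    have h := congrArg Matrix.conjTranspose hMB
    rwa [conjTranspose_mul, hM.1, hB.1, conjTranspose_zero] at h
  have hSinv : (N⁻¹ + M)⁻¹ * (N⁻¹ + M) = 1 := nonsing_inv_mul _ hS.det_pos.ne'.isUnit
  have hBNinv : (B + N)⁻¹ * (B + N) = 1 := nonsing_inv_mul _ hBN.det_pos.ne'.isUnit
  apply inv_eq_right_inv
  set T := (N⁻¹ + M)⁻¹ with hT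
  set P := (B + N)⁻¹ with hP
  have hkey : T + T * (M * N) = N := by
    have h2 : (N⁻¹ + M) * N = 1 + M * N := by
      rw [add_mul, nonsing_inv_mul _ hN.det_pos.ne'.isUnit]
    calc T + T * (M * N) = T * (1 + M * N) := by rw [mul_add, mul_one]
      _ = T * ((N⁻¹ + M) * N) := by rw [h2]
      _ = N := by rw [← mul_assoc, hSinv, one_mul]
  have h1 : B * P + N * P = 1 := by
    rw [← add_mul]; exact mul_nonsing_inv _ hBN.det_pos.ne'.isUnit
  have hNP : N * P = 1 - B * P := eq_sub_of_add_eq' h1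
  have hTP : T * P = 1 - B * P - T * M := by
    have hT' : T = N - T * (M * N) := eq_sub_of_add_eq hkey
    calc T * P = (N - T * (M * N)) * P := by rw [← hT']
      _ = N * P - T * M * (N * P) := by noncomm_ring
      _ = (1 - B*P) - T * M * (1 - B*P) := by rw [hNP]
      _ = 1 - B*P - T*M + T * (M*B) * P := by noncomm_ring
      _ = 1 - B*P - T*M := by rw [hMB]; noncomm_ring
  calc (B + T) * (P + M) = B*P + B*M + (T*P + T*M) := by noncomm_ring
    _ = B*P + 0 + ((1 - B*P - T*M) + T*M) := by rw [hBM, hTP]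
    _ = 1 := by noncomm_ring
end

section
/- Let N be a positive definite real symmetric n×n matrix, M a positive semidefinite real symmetric n×n matrix with M·B = 0 for a positive semidefinite matrix B, and Ñ := (N⁻¹ + M)⁻¹. Then det(B + Ñ)·det(N) = det(B + N)·det(Ñ). -/
open Matrix

theorem enhancement_det_identity {n : ℕ}
    (N M B : Matrix (Fin n) (Fin n) ℝ)
    (hN : N.PosDef) (hM : M.PosSemidef) (hB : B.PosSemidef)
    (hMB : M * B = 0) :
    (B + (N⁻¹ + M)⁻¹).det * N.det = (B + N).det * ((N⁻¹ + M)⁻¹).det := by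
  set A := N⁻¹ + M with hA
  have hApd : A.PosDef := hN.inv.add_posSemidef hM
  have hAunit : IsUnit A.det := hApd.det_pos.ne'.isUnit
  have hNunit : IsUnit N.det := hN.det_pos.ne'.isUnit
  have h1 : B + A⁻¹ = A⁻¹ * (A * B + 1) := by
    rw [Matrix.mul_add, ← Matrix.mul_assoc, Matrix.nonsing_inv_mul A hAunit,
      Matrix.one_mul, Matrix.mul_one, add_comm]
  have h2 : A * B = N⁻¹ * B := by
    rw [hA, Matrix.add_mul, hMB, add_zero]
  have h3 : N⁻¹ * B + 1 = N⁻¹ * (B + N) := by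
    rw [Matrix.mul_add, Matrix.nonsing_inv_mul N hNunit]
  have hdet : (B + A⁻¹).det = A⁻¹.det * (N.det⁻¹ * (B + N).det) := by
    rw [h1, Matrix.det_mul, h2, h3, Matrix.det_mul, Matrix.det_nonsing_inv]
    rw [Ring.inverse_eq_inv, Matrix.det_nonsing_inv, Ring.inverse_eq_inv]
  rw [hdet]
  have : N.det ≠ 0 := hN.det_pos.ne'
  field_simp
end

section
/- Let A, B, Ñ, N₂ be real symmetric n×n matrices with B ⪰ 0, Ñ ≻ 0, N₂ ≻ 0, A ⪰ 0, and suppose that for some positive semidefinite M, (B + Ñ)⁻¹ = (B + N₂)⁻¹ + M and M·(A − B) = 0 where A ⪰ B. Then (A + Ñ)(B + Ñ)⁻¹ = (A + N₂)(B + N₂)⁻¹, and consequently det(A + Ñ)/det(B + Ñ) = det(A + N₂)/det(B + N₂). -/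
open Matrix

theorem rate_preservation_identity {n : ℕ}
    (A B Nt N₂ M : Matrix (Fin n) (Fin n) ℝ)
    (hA : A.PosSemidef) (hB : B.PosSemidef) (hNt : Nt.PosDef) (hN₂ : N₂.PosDef)
    (hM : M.PosSemidef)
    (hinv : (B + Nt)⁻¹ = (B + N₂)⁻¹ + M)
    (hAB : (A - B).PosSemidef)
    (hMA : M * (A - B) = 0) :
    (A + Nt) * (B + Nt)⁻¹ = (A + N₂) * (B + N₂)⁻¹ ∧
      (A + Nt).det / (B + Nt).det = (A + N₂).det / (B + N₂).det := by
  have hBNt : (B + Nt).PosDef := Matrix.PosDef.posSemidef_add hB hNt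
  have hBN₂ : (B + N₂).PosDef := Matrix.PosDef.posSemidef_add hB hN₂
  have d1 : (B + Nt).det ≠ 0 := hBNt.det_pos.ne'
  have d2 : (B + N₂).det ≠ 0 := hBN₂.det_pos.ne'
  -- (A - B) * M = 0 by transposing hMA
  have h1 : (A - B) * M = 0 := by
    have := congrArg Matrix.transpose hMA
    rw [Matrix.transpose_mul] at this
    have hABt : (A - B)ᵀ = A - B := hAB.1
    have hMt : Mᵀ = M := hM.1
    simpa [hABt, hMt] using this
  have key : (A - B) * (B + Nt)⁻¹ = (A - B) * (B + N₂)⁻¹ := by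
    rw [hinv, Matrix.mul_add, h1, add_zero]
  have e1 : (A + Nt) * (B + Nt)⁻¹ = (A - B) * (B + Nt)⁻¹ + 1 := by
    have h : A + Nt = (A - B) + (B + Nt) := by abel
    rw [h, Matrix.add_mul, Matrix.mul_nonsing_inv _ (isUnit_iff_ne_zero.mpr d1)]
  have e2 : (A + N₂) * (B + N₂)⁻¹ = (A - B) * (B + N₂)⁻¹ + 1 := by
    have h : A + N₂ = (A - B) + (B + N₂) := by abel
    rw [h, Matrix.add_mul, Matrix.mul_nonsing_inv _ (isUnit_iff_ne_zero.mpr d2)]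
  have main : (A + Nt) * (B + Nt)⁻¹ = (A + N₂) * (B + N₂)⁻¹ := by
    rw [e1, e2, key]
  refine ⟨main, ?_⟩
  have := congrArg Matrix.det main
  rwa [Matrix.det_mul, Matrix.det_mul, Matrix.det_nonsing_inv, Matrix.det_nonsing_inv,
    Ring.inverse_eq_inv, Ring.inverse_eq_inv, ← div_eq_mul_inv, ← div_eq_mul_inv] at this
end

section
/- Let N₁ ⪯ N₂ be positive definite real symmetric n×n matrices and let A ⪰ B ⪰ 0 be real symmetric positive semidefinite matrices. Then det(A+N₁)/det(B+N₁) ≥ det(A+N₂)/det(B+N₂). -/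
open Matrix

section Aux

variable {n : ℕ}

open scoped MatrixOrder in
noncomputable def Matrix.PosSemidef.sqrt {A : Matrix (Fin n) (Fin n) ℝ} (_ : A.PosSemidef) :
    Matrix (Fin n) (Fin n) ℝ := CFC.sqrt A

open scoped MatrixOrder in
lemma Matrix.PosSemidef.sqrt_mul_self {A : Matrix (Fin n) (Fin n) ℝ} (hA : A.PosSemidef) :
    hA.sqrt * hA.sqrt = A := CFC.sqrt_mul_sqrt_self A hA.nonneg

open scoped MatrixOrder in
lemma Matrix.PosSemidef.posSemidef_sqrt {A : Matrix (Fin n) (Fin n) ℝ} (hA : A.PosSemidef) :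
    hA.sqrt.PosSemidef := (CFC.sqrt_nonneg A).posSemidef

private lemma sqrt_det_isUnit {P : Matrix (Fin n) (Fin n) ℝ} (hP : P.PosDef) :
    IsUnit (hP.posSemidef.sqrt).det := by
  have h : hP.posSemidef.sqrt.det * hP.posSemidef.sqrt.det = P.det := by
    rw [← det_mul, hP.posSemidef.sqrt_mul_self]
  refine isUnit_iff_ne_zero.mpr fun h0 => hP.det_pos.ne' ?_
  rw [← h, h0, mul_zero]

private lemma posDef_conj {A : Matrix (Fin n) (Fin n) ℝ} (hA : A.PosDef)
    (B : Matrix (Fin n) (Fin n) ℝ) (hB : IsUnit B.det) : (Bᴴ * A * B).PosDef := by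
  have hBu : IsUnit B := (isUnit_iff_isUnit_det B).mpr hB
  have hinj := mulVec_injective_iff_isUnit.mpr hBu
  exact hA.conjTranspose_mul_mul_same hinj

private lemma sandwich_one {P R : Matrix (Fin n) (Fin n) ℝ} (hP : IsUnit P.det)
    (hR : R * R = P⁻¹) (hRu : IsUnit R.det) : R * P * R = 1 := by
  have hP' : R⁻¹ * R⁻¹ = P := by
    rw [← Matrix.mul_inv_rev, hR, Matrix.nonsing_inv_nonsing_inv _ hP]
  rw [← hP', show R * (R⁻¹ * R⁻¹) * R = (R * R⁻¹) * (R⁻¹ * R) from by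
    simp only [Matrix.mul_assoc], Matrix.mul_nonsing_inv _ hRu,
    Matrix.nonsing_inv_mul _ hRu, one_mul]

private lemma one_sub_inv_posSemidef {X : Matrix (Fin n) (Fin n) ℝ} (hX : X.PosDef)
    (h : (X - 1).PosSemidef) : (1 - X⁻¹).PosSemidef := by
  have hT : hX.inv.posSemidef.sqrt * hX.inv.posSemidef.sqrt = X⁻¹ :=
    hX.inv.posSemidef.sqrt_mul_self
  set T := hX.inv.posSemidef.sqrt with hTdef
  have hTH : Tᴴ = T := hX.inv.posSemidef.posSemidef_sqrt.isHermitian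
  have hTu : IsUnit T.det := sqrt_det_isUnit hX.inv
  have hXu : IsUnit X.det := isUnit_iff_ne_zero.mpr hX.det_pos.ne'
  have hsand : T * X * T = 1 := sandwich_one hXu hT hTu
  have key : Tᴴ * (X - 1) * T = 1 - X⁻¹ := by
    rw [hTH, Matrix.mul_sub, Matrix.sub_mul, Matrix.mul_one, hsand, hT]
  have := h.conjTranspose_mul_mul_same T
  rwa [key] at this

private lemma inv_sub_inv_posSemidef {M₁ M₂ : Matrix (Fin n) (Fin n) ℝ} (h₁ : M₁.PosDef)
    (h₂ : M₂.PosDef) (h : (M₂ - M₁).PosSemidef) : (M₁⁻¹ - M₂⁻¹).PosSemidef := by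
  have hR : h₁.inv.posSemidef.sqrt * h₁.inv.posSemidef.sqrt = M₁⁻¹ :=
    h₁.inv.posSemidef.sqrt_mul_self
  set R := h₁.inv.posSemidef.sqrt with hRdef
  have hRH : Rᴴ = R := h₁.inv.posSemidef.posSemidef_sqrt.isHermitian
  have hRu : IsUnit R.det := sqrt_det_isUnit h₁.inv
  have h₁u : IsUnit M₁.det := isUnit_iff_ne_zero.mpr h₁.det_pos.ne'
  have hsand : R * M₁ * R = 1 := sandwich_one h₁u hR hRu
  have hX : (R * M₂ * R).PosDef := by
    have := posDef_conj h₂ R hRu; rwa [hRH] at this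
  have hX1 : (R * M₂ * R - 1).PosSemidef := by
    have := h.conjTranspose_mul_mul_same R
    rwa [hRH, Matrix.mul_sub, Matrix.sub_mul, hsand] at this
  have h1X := one_sub_inv_posSemidef hX hX1
  have hXinv : (R * M₂ * R)⁻¹ = R⁻¹ * (M₂⁻¹ * R⁻¹) := by
    rw [Matrix.mul_inv_rev, Matrix.mul_inv_rev]
  have key : Rᴴ * (1 - (R * M₂ * R)⁻¹) * R = M₁⁻¹ - M₂⁻¹ := by
    rw [hRH, Matrix.mul_sub, Matrix.sub_mul, Matrix.mul_one, hR, hXinv,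
      ← Matrix.mul_assoc R, Matrix.mul_nonsing_inv _ hRu, one_mul,
      Matrix.mul_assoc, Matrix.nonsing_inv_mul _ hRu, mul_one]
  have := h1X.conjTranspose_mul_mul_same R
  rwa [key] at this

private lemma one_le_det_one_add {P : Matrix (Fin n) (Fin n) ℝ} (hP : P.PosSemidef) :
    1 ≤ (1 + P).det := by
  have hH := hP.isHermitian
  have hUU : (hH.eigenvectorUnitary : Matrix (Fin n) (Fin n) ℝ) *
      star (hH.eigenvectorUnitary : Matrix (Fin n) (Fin n) ℝ) = 1 :=
    mem_unitaryGroup_iff.mp hH.eigenvectorUnitary.2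
  have hUU' : star (hH.eigenvectorUnitary : Matrix (Fin n) (Fin n) ℝ) *
      (hH.eigenvectorUnitary : Matrix (Fin n) (Fin n) ℝ) = 1 :=
    mem_unitaryGroup_iff'.mp hH.eigenvectorUnitary.2
  have h1 : (1 : Matrix (Fin n) (Fin n) ℝ) + P
      = (hH.eigenvectorUnitary : Matrix (Fin n) (Fin n) ℝ) *
        (1 + diagonal (RCLike.ofReal ∘ hH.eigenvalues)) *
        star (hH.eigenvectorUnitary : Matrix (Fin n) (Fin n) ℝ) := by
    rw [Matrix.mul_add, Matrix.add_mul, Matrix.mul_one, hUU]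
    exact congrArg (1 + ·) hH.spectral_theorem
  rw [h1, det_mul, det_mul, mul_comm, ← mul_assoc, ← det_mul, hUU', det_one, one_mul]
  have : (1 : Matrix (Fin n) (Fin n) ℝ) + diagonal (RCLike.ofReal ∘ hH.eigenvalues)
      = diagonal (fun i => 1 + hH.eigenvalues i) := by
    rw [← Matrix.diagonal_one, Matrix.diagonal_add]
    congr 1
  rw [this, det_diagonal]
  have hle : ∀ i ∈ (Finset.univ : Finset (Fin n)), (1:ℝ) ≤ 1 + hH.eigenvalues i := by
    intro i _
    have h0 : 0 ≤ hH.eigenvalues i := hP.eigenvalues_nonneg i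
    linarith
  calc (1:ℝ) = ∏ _i : Fin n, (1:ℝ) := by simp
    _ ≤ ∏ i : Fin n, (1 + hH.eigenvalues i) :=
        Finset.prod_le_prod (fun i _ => zero_le_one) hle

private lemma add_factor {M S : Matrix (Fin n) (Fin n) ℝ} (hM : IsUnit M.det) :
    M + S * S = M * (1 + M⁻¹ * S * S) := by
  rw [Matrix.mul_add, Matrix.mul_one, ← Matrix.mul_assoc, ← Matrix.mul_assoc,
    Matrix.mul_nonsing_inv _ hM, one_mul]

private lemma det_add_div_det {M C : Matrix (Fin n) (Fin n) ℝ} (hM : M.PosDef)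
    (hC : C.PosSemidef) :
    (M + C).det / M.det = (1 + hC.sqrt * (M⁻¹ * hC.sqrt)).det := by
  have hS : hC.sqrt * hC.sqrt = C := hC.sqrt_mul_self
  have hMu : IsUnit M.det := isUnit_iff_ne_zero.mpr hM.det_pos.ne'
  conv_lhs => rw [← hS]
  rw [add_factor hMu, det_mul, mul_div_cancel_left₀ _ hM.det_pos.ne',
    Matrix.det_one_add_mul_comm]

private lemma det_le_det_add {M D : Matrix (Fin n) (Fin n) ℝ} (hM : M.PosDef)
    (hD : D.PosSemidef) : M.det ≤ (M + D).det := by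
  have hS : hD.sqrt * hD.sqrt = D := hD.sqrt_mul_self
  have hSH : hD.sqrt.conjTranspose = hD.sqrt := hD.posSemidef_sqrt.isHermitian
  have hMu : IsUnit M.det := isUnit_iff_ne_zero.mpr hM.det_pos.ne'
  have hQ : (hD.sqrt * (M⁻¹ * hD.sqrt)).PosSemidef := by
    have := hM.inv.posSemidef.conjTranspose_mul_mul_same hD.sqrt
    rwa [hSH, Matrix.mul_assoc] at this
  have h2 : 1 ≤ (1 + hD.sqrt * (M⁻¹ * hD.sqrt)).det := one_le_det_one_add hQ
  calc M.det = M.det * 1 := (mul_one _).symm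
    _ ≤ M.det * (1 + hD.sqrt * (M⁻¹ * hD.sqrt)).det :=
        mul_le_mul_of_nonneg_left h2 hM.det_pos.le
    _ = (M + D).det := by
        conv_rhs => rw [← hS]
        rw [add_factor hMu, det_mul, Matrix.det_one_add_mul_comm]

end Aux

theorem det_ratio_antitone_in_noise {n : ℕ}
    (N₁ N₂ A B : Matrix (Fin n) (Fin n) ℝ)
    (hN₁ : N₁.PosDef) (hN₂ : N₂.PosDef) (hN : (N₂ - N₁).PosSemidef)
    (hB : B.PosSemidef) (hAB : (A - B).PosSemidef) :
    (A + N₂).det / (B + N₂).det ≤ (A + N₁).det / (B + N₁).det := by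
  have hM₁ : (B + N₁).PosDef := Matrix.PosDef.posSemidef_add hB hN₁
  have hM₂ : (B + N₂).PosDef := Matrix.PosDef.posSemidef_add hB hN₂
  have hdiff : ((B + N₂) - (B + N₁)).PosSemidef := by
    have h : (B + N₂) - (B + N₁) = N₂ - N₁ := by abel
    rwa [h]
  have hA₁ : A + N₁ = (B + N₁) + (A - B) := by abel
  have hA₂ : A + N₂ = (B + N₂) + (A - B) := by abel
  rw [hA₁, hA₂, det_add_div_det hM₂ hAB, det_add_div_det hM₁ hAB]
  set S := hAB.sqrt with hSdef
  have hSH : Sᴴ = S := hAB.posSemidef_sqrt.isHermitian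
  have hQ₂ : (S * ((B + N₂)⁻¹ * S)).PosSemidef := by
    have := hM₂.inv.posSemidef.conjTranspose_mul_mul_same S
    rwa [hSH, Matrix.mul_assoc] at this
  have hinv := inv_sub_inv_posSemidef hM₁ hM₂ hdiff
  have hQdiff : (S * ((B + N₁)⁻¹ * S) - S * ((B + N₂)⁻¹ * S)).PosSemidef := by
    have := hinv.conjTranspose_mul_mul_same S
    rwa [hSH, Matrix.mul_sub, Matrix.sub_mul, Matrix.mul_assoc, Matrix.mul_assoc] at this
  have h2 : (1 + S * ((B + N₂)⁻¹ * S)).PosDef := Matrix.PosDef.one.add_posSemidef hQ₂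
  have heq : (1 : Matrix (Fin n) (Fin n) ℝ) + S * ((B + N₁)⁻¹ * S)
      = (1 + S * ((B + N₂)⁻¹ * S)) +
        (S * ((B + N₁)⁻¹ * S) - S * ((B + N₂)⁻¹ * S)) := by abel
  rw [heq]
  exact det_le_det_add h2 hQdiff
end

section
/- Let N₁ ≻ 0 be a real symmetric n×n matrix, M₁ ⪰ 0, λ > 0, and B ⪰ 0 with M₁B = 0. Set Ñ := (N₁⁻¹ + M₁/λ)⁻¹. Then λ(B+Ñ)⁻¹ = λ(B+N₁)⁻¹ + M₁. Moreover, if additionally λ(B+N₁)⁻¹ + M₁ = λ(B+N₂)⁻¹ + M₂ for some N₂ ≻ 0 and M₂ ⪰ 0 (the KKT stationarity condition), then λ(B+Ñ)⁻¹ = λ(B+N₂)⁻¹ + M₂ and Ñ ⪯ N₂. -/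
open Matrix

private lemma psd_smul {n : ℕ} {A : Matrix (Fin n) (Fin n) ℝ} {c : ℝ}
    (hA : A.PosSemidef) (hc : 0 ≤ c) : (c • A).PosSemidef := by
  refine ⟨?_, fun x => ?_⟩
  · unfold Matrix.IsHermitian
    rw [conjTranspose_smul, hA.1.eq]
    simp
  · exact (hA.smul hc).2 x

private lemma psd_conj {n : ℕ} {A C : Matrix (Fin n) (Fin n) ℝ}
    (hA : A.PosSemidef) (hC : C.IsHermitian) : (C * A * C).PosSemidef := by
  have := hA.conjTranspose_mul_mul_same C
  rwa [hC.eq] at this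

open scoped MatrixOrder in
/-- If `D` is PSD with invertible determinant and `1 - D` is PSD then `D⁻¹ - 1` is PSD. -/
private lemma inv_sub_one_psd {n : ℕ} {D : Matrix (Fin n) (Fin n) ℝ}
    (hD : D.PosSemidef) (hdet : IsUnit D.det) (h : ((1 : Matrix (Fin n) (Fin n) ℝ) - D).PosSemidef) :
    (D⁻¹ - 1).PosSemidef := by
  set T := CFC.sqrt D with hT
  have hTT : T * T = D := CFC.sqrt_mul_sqrt_self D hD.nonneg
  have hTherm : T.IsHermitian := (CFC.sqrt_nonneg D).posSemidef.1
  have hTdet : IsUnit T.det := by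
    have : T.det * T.det = D.det := by rw [← det_mul, hTT]
    exact isUnit_of_mul_isUnit_left (this ▸ hdet)
  have hTinv : T * T⁻¹ = 1 := mul_nonsing_inv T hTdet
  have hTinv' : T⁻¹ * T = 1 := nonsing_inv_mul T hTdet
  have hkey : T⁻¹ * (1 - D) * T⁻¹ = D⁻¹ - 1 := by
    rw [Matrix.mul_sub, Matrix.mul_one, Matrix.sub_mul, ← hTT, Matrix.mul_inv_rev]
    rw [show T⁻¹ * (T * T) * T⁻¹ = (T⁻¹ * T) * (T * T⁻¹) by noncomm_ring]
    rw [hTinv, hTinv', Matrix.mul_one]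
  have := psd_conj h hTherm.inv
  rwa [hkey] at this

open scoped MatrixOrder in
/-- Loewner antitone of inverse: if `P, Q` are posdef and `Q - P` PSD then `P⁻¹ - Q⁻¹` PSD. -/
private lemma inv_antitone {n : ℕ} {P Q : Matrix (Fin n) (Fin n) ℝ}
    (hP : P.PosDef) (hQ : Q.PosDef) (h : (Q - P).PosSemidef) :
    (P⁻¹ - Q⁻¹).PosSemidef := by
  set S := CFC.sqrt Q with hS
  have hSS : S * S = Q := CFC.sqrt_mul_sqrt_self Q hQ.posSemidef.nonneg
  have hSherm : S.IsHermitian := (CFC.sqrt_nonneg Q).posSemidef.1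
  have hSdet : IsUnit S.det := by
    have : S.det * S.det = Q.det := by rw [← det_mul, hSS]
    exact isUnit_of_mul_isUnit_left (this ▸ hQ.det_pos.ne'.isUnit)
  have hSinv : S * S⁻¹ = 1 := mul_nonsing_inv S hSdet
  have hSinv' : S⁻¹ * S = 1 := nonsing_inv_mul S hSdet
  have hSinvherm : (S⁻¹).IsHermitian := hSherm.inv
  set D := S⁻¹ * P * S⁻¹ with hD
  have hDpsd : D.PosSemidef := psd_conj hP.posSemidef hSinvherm
  have hDdet : IsUnit D.det := by
    rw [isUnit_iff_ne_zero, hD, det_mul, det_mul, det_nonsing_inv, Ring.inverse_eq_inv']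
    exact mul_ne_zero (mul_ne_zero (inv_ne_zero hSdet.ne_zero) hP.det_pos.ne')
      (inv_ne_zero hSdet.ne_zero)
  have h1 : ((1 : Matrix (Fin n) (Fin n) ℝ) - D).PosSemidef := by
    have := psd_conj h hSinvherm
    have e : S⁻¹ * (Q - P) * S⁻¹ = 1 - D := by
      rw [Matrix.mul_sub, Matrix.sub_mul, hD, ← hSS,
        show S⁻¹ * (S * S) * S⁻¹ = (S⁻¹ * S) * (S * S⁻¹) by noncomm_ring, hSinv, hSinv',
        Matrix.mul_one]
    rwa [e] at this
  have h2 := inv_sub_one_psd hDpsd hDdet h1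
  have hDinv : D⁻¹ = S * P⁻¹ * S := by
    rw [hD, Matrix.mul_inv_rev, Matrix.mul_inv_rev,
      nonsing_inv_nonsing_inv _ hSdet, Matrix.mul_assoc]
  have e2 : S⁻¹ * (D⁻¹ - 1) * S⁻¹ = P⁻¹ - Q⁻¹ := by
    rw [Matrix.mul_sub, Matrix.sub_mul, hDinv, Matrix.mul_one,
      show S⁻¹ * (S * P⁻¹ * S) * S⁻¹ = (S⁻¹ * S) * P⁻¹ * (S * S⁻¹) by noncomm_ring,
      hSinv, hSinv', Matrix.mul_one, Matrix.one_mul, ← hSS, Matrix.mul_inv_rev]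
  have := psd_conj h2 hSinvherm
  rwa [e2] at this

theorem enhancement_with_kkt {n : ℕ}
    (N₁ N₂ M₁ M₂ B : Matrix (Fin n) (Fin n) ℝ) (lam : ℝ)
    (hN₁ : N₁.PosDef) (hM₁ : M₁.PosSemidef) (hlam : 0 < lam)
    (hB : B.PosSemidef) (hMB : M₁ * B = 0)
    (hN₂ : N₂.PosDef) (hM₂ : M₂.PosSemidef) :
    lam • (B + (N₁⁻¹ + lam⁻¹ • M₁)⁻¹)⁻¹ = lam • (B + N₁)⁻¹ + M₁ ∧
      (lam • (B + N₁)⁻¹ + M₁ = lam • (B + N₂)⁻¹ + M₂ →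
        lam • (B + (N₁⁻¹ + lam⁻¹ • M₁)⁻¹)⁻¹ = lam • (B + N₂)⁻¹ + M₂ ∧
          (N₂ - (N₁⁻¹ + lam⁻¹ • M₁)⁻¹).PosSemidef) := by
  have hlaminv : (0:ℝ) < lam⁻¹ := inv_pos.mpr hlam
  set S : Matrix (Fin n) (Fin n) ℝ := N₁⁻¹ + lam⁻¹ • M₁ with hSdef
  set Nt : Matrix (Fin n) (Fin n) ℝ := S⁻¹ with hNtdef
  have hSpd : S.PosDef := hN₁.inv.add_posSemidef (psd_smul hM₁ hlaminv.le)
  have hNt : Nt.PosDef := hSpd.inv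
  have hBN₁pd : (B + N₁).PosDef := Matrix.PosDef.posSemidef_add hB hN₁
  have hBNtpd : (B + Nt).PosDef := Matrix.PosDef.posSemidef_add hB hNt
  have hBN₂pd : (B + N₂).PosDef := Matrix.PosDef.posSemidef_add hB hN₂
  have dN1 : IsUnit N₁.det := hN₁.det_pos.ne'.isUnit
  have dS : IsUnit S.det := hSpd.det_pos.ne'.isUnit
  have d1 : IsUnit (B + N₁).det := hBN₁pd.det_pos.ne'.isUnit
  have dt : IsUnit (B + Nt).det := hBNtpd.det_pos.ne'.isUnit
  -- B * M₁ = 0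
  have hBt : Bᵀ = B := hB.1
  have hMt : M₁ᵀ = M₁ := hM₁.1
  have hBM : B * M₁ = 0 := by
    have := congrArg Matrix.transpose hMB
    rwa [Matrix.transpose_mul, hBt, hMt, Matrix.transpose_zero] at this
  -- the enhancement identity for Nt
  have hSNt : S * Nt = 1 := mul_nonsing_inv _ dS
  have h1 : N₁ * S = 1 + lam⁻¹ • (N₁ * M₁) := by
    rw [hSdef, Matrix.mul_add, mul_nonsing_inv _ dN1, Matrix.mul_smul]
  have h2 : N₁ = Nt + lam⁻¹ • (N₁ * M₁ * Nt) := by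
    calc N₁ = N₁ * (S * Nt) := by rw [hSNt, Matrix.mul_one]
    _ = (N₁ * S) * Nt := by rw [Matrix.mul_assoc]
    _ = Nt + lam⁻¹ • (N₁ * M₁ * Nt) := by
        rw [h1, Matrix.add_mul, Matrix.one_mul, Matrix.smul_mul]
  have hEnh : Nt = N₁ - lam⁻¹ • (N₁ * M₁ * Nt) := eq_sub_of_add_eq h2.symm
  have hNM : N₁ * M₁ = (B + N₁) * M₁ := by rw [Matrix.add_mul, hBM, zero_add]
  -- key multiplication
  have hmain : (lam • (B + N₁)⁻¹ + M₁) * (B + Nt) = lam • 1 := by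
    have e1 : B + Nt = (B + N₁) - lam⁻¹ • (N₁ * M₁ * Nt) := by
      nth_rewrite 1 [hEnh]; abel
    have einv : (B + N₁)⁻¹ * (B + Nt) = 1 - lam⁻¹ • (M₁ * Nt) := by
      rw [e1, Matrix.mul_sub, nonsing_inv_mul _ d1, Matrix.mul_smul, hNM,
        Matrix.mul_assoc (B + N₁), ← Matrix.mul_assoc (B + N₁)⁻¹,
        nonsing_inv_mul _ d1, Matrix.one_mul]
    have eM : M₁ * (B + Nt) = M₁ * Nt := by
      rw [Matrix.mul_add, hMB, zero_add]
    rw [Matrix.add_mul, Matrix.smul_mul, einv, eM, smul_sub, smul_smul,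
      mul_inv_cancel₀ hlam.ne', one_smul, sub_add_cancel]
  have part1 : lam • (B + Nt)⁻¹ = lam • (B + N₁)⁻¹ + M₁ := by
    have := congrArg (fun Z => Z * (B + Nt)⁻¹) hmain
    rw [Matrix.mul_assoc, mul_nonsing_inv _ dt, Matrix.mul_one,
      Matrix.smul_mul, Matrix.one_mul] at this
    exact this.symm
  refine ⟨part1, fun hkkt => ?_⟩
  have eq2 : lam • (B + Nt)⁻¹ = lam • (B + N₂)⁻¹ + M₂ := part1.trans hkkt
  refine ⟨eq2, ?_⟩
  have hdiffeq : (B + Nt)⁻¹ - (B + N₂)⁻¹ = lam⁻¹ • M₂ := by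
    have h3 : lam • ((B + Nt)⁻¹ - (B + N₂)⁻¹) = M₂ := by
      rw [smul_sub, eq2]; abel
    have := congrArg (fun Z => lam⁻¹ • Z) h3
    simpa [smul_smul, inv_mul_cancel₀ hlam.ne'] using this
  have hdiff : ((B + Nt)⁻¹ - (B + N₂)⁻¹).PosSemidef := by
    rw [hdiffeq]; exact psd_smul hM₂ hlaminv.le
  have := inv_antitone hBN₂pd.inv hBNtpd.inv hdiff
  rw [nonsing_inv_nonsing_inv _ hBN₂pd.det_pos.ne'.isUnit,
    nonsing_inv_nonsing_inv _ dt] at this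
  have e3 : (B + N₂) - (B + Nt) = N₂ - Nt := by abel
  rwa [e3] at this
end
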